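/- arXiv:1510.00657 — 2 statements merged into one kernel-verified Lean document; each statement's English description precedes it below -/
import Mathlib

section
/- Lam's ideal J_Lam(k) (over Q(q)) contains the scalar extension of the Assaf ideal I_Assaf(k). In particular, for a < b < c with c - a ≤ k, the element u_b u_a u_c - u_a u_c u_b lies in J_Lam(k). -/
open FreeAlgebra

noncomputable section

/-- The free associative algebra `U_q = ℚ(q)⟨u_1,…,u_N⟩`. -/
abbrev Uq (N : ℕ) := FreeAlgebra (RatFunc ℚ) (Fin N)

/-- The variable `q`. -/
def q : RatFunc ℚ := RatFunc.X

/-- Generators of Lam's ideal `J_Lam(k)`: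
`u_a²`; `u_{a+k} u_a u_{a+k}` and `u_a u_{a+k} u_a`; `u_a u_b - u_b u_a` for `b - a > k`;
and `u_a u_b - q⁻¹ u_b u_a` for `0 < b - a < k`. -/
def genLam (N k : ℕ) : Set (Uq N) :=
  {x | ∃ a : Fin N, x = ι (RatFunc ℚ) a * ι (RatFunc ℚ) a} ∪
  {x | ∃ a b : Fin N, (b : ℕ) = (a : ℕ) + k ∧
      x = ι (RatFunc ℚ) b * ι (RatFunc ℚ) a * ι (RatFunc ℚ) b} ∪
  {x | ∃ a b : Fin N, (b : ℕ) = (a : ℕ) + k ∧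
      x = ι (RatFunc ℚ) a * ι (RatFunc ℚ) b * ι (RatFunc ℚ) a} ∪
  {x | ∃ a b : Fin N, (a : ℕ) + k < (b : ℕ) ∧
      x = ι (RatFunc ℚ) a * ι (RatFunc ℚ) b - ι (RatFunc ℚ) b * ι (RatFunc ℚ) a} ∪
  {x | ∃ a b : Fin N, a < b ∧ (b : ℕ) < (a : ℕ) + k ∧
      x = ι (RatFunc ℚ) a * ι (RatFunc ℚ) b - q⁻¹ • (ι (RatFunc ℚ) b * ι (RatFunc ℚ) a)}

/-- Lam's ideal `J_Lam(k)`. -/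
def JLam (N k : ℕ) : TwoSidedIdeal (Uq N) := TwoSidedIdeal.span (genLam N k)

/-- The canonical map `ℤ⟨u_1,…,u_N⟩ → ℚ(q)⟨u_1,…,u_N⟩` (scalar extension). -/
def toUq (N : ℕ) : FreeAlgebra ℤ (Fin N) →ₐ[ℤ] Uq N :=
  FreeAlgebra.lift ℤ (fun i => ι (RatFunc ℚ) i)

/-- The monomial `u_w` of a word `w`, over `ℤ`. -/
def mon {N : ℕ} (w : List (Fin N)) : FreeAlgebra ℤ (Fin N) := (w.map (ι ℤ)).prod

/-- Generators of the Assaf ideal `I_Assaf(k) ⊆ ℤ⟨u_1,…,u_N⟩`: all monomials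
`u_w` lying in `J_Lam(k)`, together with the listed degree-3 binomials. -/
def genAssaf (N k : ℕ) : Set (FreeAlgebra ℤ (Fin N)) :=
  {x | ∃ w : List (Fin N), x = mon w ∧ toUq N (mon w) ∈ JLam N k} ∪
  {x | ∃ a b c : Fin N, a < b ∧ b < c ∧ (a : ℕ) + k < (c : ℕ) ∧
      x = ι ℤ b * ι ℤ a * ι ℤ c - ι ℤ b * ι ℤ c * ι ℤ a} ∪
  {x | ∃ a b c : Fin N, a < b ∧ b < c ∧ (a : ℕ) + k < (c : ℕ) ∧
      x = ι ℤ a * ι ℤ c * ι ℤ b - ι ℤ c * ι ℤ a * ι ℤ b} ∪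
  {x | ∃ a b c : Fin N, a < b ∧ b < c ∧ (c : ℕ) ≤ (a : ℕ) + k ∧
      x = ι ℤ b * ι ℤ a * ι ℤ c - ι ℤ a * ι ℤ c * ι ℤ b} ∪
  {x | ∃ a b c : Fin N, a < b ∧ b < c ∧ (c : ℕ) ≤ (a : ℕ) + k ∧
      x = ι ℤ b * ι ℤ c * ι ℤ a - ι ℤ c * ι ℤ a * ι ℤ b}


lemma gen5_mem (N k : ℕ) {a b : Fin N} (hab : a < b) (hb : (b:ℕ) < (a:ℕ) + k) :
    ι (RatFunc ℚ) a * ι (RatFunc ℚ) b - q⁻¹ • (ι (RatFunc ℚ) b * ι (RatFunc ℚ) a) ∈ JLam N k :=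
  TwoSidedIdeal.subset_span (Or.inr ⟨a, b, hab, hb, rfl⟩)

lemma gen4_mem (N k : ℕ) {a b : Fin N} (h : (a:ℕ) + k < (b:ℕ)) :
    ι (RatFunc ℚ) a * ι (RatFunc ℚ) b - ι (RatFunc ℚ) b * ι (RatFunc ℚ) a ∈ JLam N k :=
  TwoSidedIdeal.subset_span (Or.inl (Or.inr ⟨a, b, h, rfl⟩))

lemma JLam_smul_mem (N k : ℕ) (c : RatFunc ℚ) {x : Uq N} (hx : x ∈ JLam N k) :
    c • x ∈ JLam N k := by
  rw [Algebra.smul_def]; exact (JLam N k).mul_mem_left _ _ hx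

lemma E1_mem (N k : ℕ) {a b c : Fin N} (hab : a < b) (hbc : b < c) (hc : (c:ℕ) ≤ (a:ℕ)+k) :
    ι (RatFunc ℚ) b * ι (RatFunc ℚ) a * ι (RatFunc ℚ) c
      - ι (RatFunc ℚ) a * ι (RatFunc ℚ) c * ι (RatFunc ℚ) b ∈ JLam N k := by
  have hab' : (a:ℕ) < (b:ℕ) := hab
  have hbc' : (b:ℕ) < (c:ℕ) := hbc
  have hb : (b:ℕ) < (a:ℕ) + k := by omega
  have hcb : (c:ℕ) < (b:ℕ) + k := by omega
  have g1 := gen5_mem N k hab hb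
  have g2 := gen5_mem N k hbc hcb
  have h1 : -q * q⁻¹ = -1 := by
    rw [neg_mul, mul_inv_cancel₀ (by exact RatFunc.X_ne_zero)]
  have key : ι (RatFunc ℚ) b * ι (RatFunc ℚ) a * ι (RatFunc ℚ) c
      - ι (RatFunc ℚ) a * ι (RatFunc ℚ) c * ι (RatFunc ℚ) b
      = (-q) • ((ι (RatFunc ℚ) a * ι (RatFunc ℚ) b - q⁻¹ • (ι (RatFunc ℚ) b * ι (RatFunc ℚ) a)) * ι (RatFunc ℚ) c
        - ι (RatFunc ℚ) a * (ι (RatFunc ℚ) b * ι (RatFunc ℚ) c - q⁻¹ • (ι (RatFunc ℚ) c * ι (RatFunc ℚ) b))) := by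
    simp only [smul_sub, sub_mul, mul_sub, smul_mul_assoc, mul_smul_comm, smul_smul, h1,
      neg_smul, one_smul, mul_assoc]
    abel
  rw [key]
  exact JLam_smul_mem N k _ ((JLam N k).sub_mem ((JLam N k).mul_mem_right _ _ g1)
    ((JLam N k).mul_mem_left _ _ g2))

lemma E2_mem (N k : ℕ) {a b c : Fin N} (hab : a < b) (hbc : b < c) (hc : (c:ℕ) ≤ (a:ℕ)+k) :
    ι (RatFunc ℚ) b * ι (RatFunc ℚ) c * ι (RatFunc ℚ) a
      - ι (RatFunc ℚ) c * ι (RatFunc ℚ) a * ι (RatFunc ℚ) b ∈ JLam N k := by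
  have hab' : (a:ℕ) < (b:ℕ) := hab
  have hbc' : (b:ℕ) < (c:ℕ) := hbc
  have hb : (b:ℕ) < (a:ℕ) + k := by omega
  have hcb : (c:ℕ) < (b:ℕ) + k := by omega
  have g1 := gen5_mem N k hab hb
  have g2 := gen5_mem N k hbc hcb
  have key : ι (RatFunc ℚ) b * ι (RatFunc ℚ) c * ι (RatFunc ℚ) a
      - ι (RatFunc ℚ) c * ι (RatFunc ℚ) a * ι (RatFunc ℚ) b
      = (ι (RatFunc ℚ) b * ι (RatFunc ℚ) c - q⁻¹ • (ι (RatFunc ℚ) c * ι (RatFunc ℚ) b)) * ι (RatFunc ℚ) a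
        - ι (RatFunc ℚ) c * (ι (RatFunc ℚ) a * ι (RatFunc ℚ) b - q⁻¹ • (ι (RatFunc ℚ) b * ι (RatFunc ℚ) a)) := by
    simp only [sub_mul, mul_sub, smul_mul_assoc, mul_smul_comm, mul_assoc]
    abel
  rw [key]
  exact (JLam N k).sub_mem ((JLam N k).mul_mem_right _ _ g2) ((JLam N k).mul_mem_left _ _ g1)

/-- `J_Lam(k)` contains the scalar extension of the Assaf ideal `I_Assaf(k)`;
in particular `u_b u_a u_c - u_a u_c u_b ∈ J_Lam(k)` whenever `a < b < c` and `c - a ≤ k`. -/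
theorem stmt11 (N k : ℕ) (hk : 0 < k) :
    (∀ x ∈ TwoSidedIdeal.span (genAssaf N k), toUq N x ∈ JLam N k) ∧
    (∀ a b c : Fin N, a < b → b < c → (c : ℕ) ≤ (a : ℕ) + k →
      ι (RatFunc ℚ) b * ι (RatFunc ℚ) a * ι (RatFunc ℚ) c
        - ι (RatFunc ℚ) a * ι (RatFunc ℚ) c * ι (RatFunc ℚ) b ∈ JLam N k) := by
  constructor
  · intro x hx
    rw [TwoSidedIdeal.mem_span_iff] at hx
    refine (TwoSidedIdeal.mem_comap (toUq N)).mp (hx ((JLam N k).comap (toUq N)) ?_)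
    rintro y ((((⟨w, rfl, hw⟩ | ⟨a, b, c, hab, hbc, hc, rfl⟩) | ⟨a, b, c, hab, hbc, hc, rfl⟩) |
      ⟨a, b, c, hab, hbc, hc, rfl⟩) | ⟨a, b, c, hab, hbc, hc, rfl⟩) <;>
      rw [SetLike.mem_coe, TwoSidedIdeal.mem_comap (toUq N)]
    · exact hw
    · simp only [map_sub, map_mul, toUq, FreeAlgebra.lift_ι_apply]
      have key : ι (RatFunc ℚ) b * ι (RatFunc ℚ) a * ι (RatFunc ℚ) c
          - ι (RatFunc ℚ) b * ι (RatFunc ℚ) c * ι (RatFunc ℚ) a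
          = ι (RatFunc ℚ) b * (ι (RatFunc ℚ) a * ι (RatFunc ℚ) c - ι (RatFunc ℚ) c * ι (RatFunc ℚ) a) := by
        noncomm_ring
      rw [key]
      exact (JLam N k).mul_mem_left _ _ (gen4_mem N k hc)
    · simp only [map_sub, map_mul, toUq, FreeAlgebra.lift_ι_apply]
      have key : ι (RatFunc ℚ) a * ι (RatFunc ℚ) c * ι (RatFunc ℚ) b
          - ι (RatFunc ℚ) c * ι (RatFunc ℚ) a * ι (RatFunc ℚ) b
          = (ι (RatFunc ℚ) a * ι (RatFunc ℚ) c - ι (RatFunc ℚ) c * ι (RatFunc ℚ) a) * ι (RatFunc ℚ) b := by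
        noncomm_ring
      rw [key]
      exact (JLam N k).mul_mem_right _ _ (gen4_mem N k hc)
    · simp only [map_sub, map_mul, toUq, FreeAlgebra.lift_ι_apply]
      exact E1_mem N k hab hbc hc
    · simp only [map_sub, map_mul, toUq, FreeAlgebra.lift_ι_apply]
      exact E2_mem N k hab hbc hc
  · intro a b c hab hbc hc
    exact E1_mem N k hab hbc hc


end
end

section
/- In the free associative ring Z⟨u_1,...,u_N⟩, modulo the ideal I_C generated by the elements (1) u_b²u_a + u_a u_b u_a - u_b u_a u_b - u_b u_a² for a < b, (2) u_b u_c u_a + u_a u_c u_b - u_b u_a u_c - u_c u_a u_b for a < b < c, and (3) u_c u_b u_c u_a + u_b u_c u_a u_c - u_c u_b u_a u_c - u_b u_c² u_a for a < b < c, the noncommutative elementary symmetric functions e_1(u_S) and e_2(u_S) commute for every subset S ⊆ {1,...,N} with |S| ≤ 3. -/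
open FreeAlgebra

/-- Noncommutative elementary symmetric function `e_k(u_S)`. -/
noncomputable def ncElem (N : ℕ) (k : ℤ) (S : Finset (Fin N)) : FreeAlgebra ℤ (Fin N) :=
  if k < 0 then 0 else
  ∑ T ∈ S.powersetCard k.toNat, (((T.sort (· ≤ ·)).reverse).map (ι ℤ)).prod

/-- Generators of the ideal `I_C`. -/
def genC (N : ℕ) : Set (FreeAlgebra ℤ (Fin N)) :=
  {x | ∃ a b : Fin N, a < b ∧
      x = ι ℤ b * ι ℤ b * ι ℤ a + ι ℤ a * ι ℤ b * ι ℤ a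
        - ι ℤ b * ι ℤ a * ι ℤ b - ι ℤ b * ι ℤ a * ι ℤ a} ∪
  {x | ∃ a b c : Fin N, a < b ∧ b < c ∧
      x = ι ℤ b * ι ℤ c * ι ℤ a + ι ℤ a * ι ℤ c * ι ℤ b
        - ι ℤ b * ι ℤ a * ι ℤ c - ι ℤ c * ι ℤ a * ι ℤ b} ∪
  {x | ∃ a b c : Fin N, a < b ∧ b < c ∧
      x = ι ℤ c * ι ℤ b * ι ℤ c * ι ℤ a + ι ℤ b * ι ℤ c * ι ℤ a * ι ℤ c
        - ι ℤ c * ι ℤ b * ι ℤ a * ι ℤ c - ι ℤ b * ι ℤ c * ι ℤ c * ι ℤ a}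

section helpers
variable {N : ℕ}


lemma sort_pair' {a b : Fin N} (h : a < b) :
    ({a, b} : Finset (Fin N)).sort (· ≤ ·) = [a, b] := by
  rw [show ({a,b} : Finset (Fin N)) = insert a {b} from rfl,
    Finset.sort_insert (· ≤ ·) (by simp [h.le]) (by simp [h.ne]), Finset.sort_singleton]

lemma ncElem_one (S : Finset (Fin N)) : ncElem N 1 S = ∑ i ∈ S, ι ℤ i := by
  rw [ncElem, if_neg (by norm_num)]
  norm_num [Finset.powersetCard_one, Finset.sum_map]

lemma ncElem_two_small {S : Finset (Fin N)} (h : S.card < 2) : ncElem N 2 S = 0 := by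
  rw [ncElem, if_neg (by norm_num)]
  rw [show (2:ℤ).toNat = 2 from rfl, Finset.powersetCard_eq_empty.2 h, Finset.sum_empty]

lemma ncElem_two_pair {a b : Fin N} (h : a < b) :
    ncElem N 2 {a, b} = ι ℤ b * ι ℤ a := by
  rw [ncElem, if_neg (by norm_num)]
  have hc : ({a,b} : Finset (Fin N)).card = 2 := by
    rw [Finset.card_insert_of_notMem (by simp [h.ne]), Finset.card_singleton]
  rw [show (2:ℤ).toNat = 2 from rfl, ← hc, Finset.powersetCard_self, Finset.sum_singleton,
    sort_pair' h]
  simp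

lemma ncElem_two_triple {a b c : Fin N} (hab : a < b) (hbc : b < c) :
    ncElem N 2 {a, b, c} = ι ℤ c * ι ℤ b + ι ℤ b * ι ℤ a + ι ℤ c * ι ℤ a := by
  have hac : a < c := hab.trans hbc
  have hbc2 : ({b,c} : Finset (Fin N)).card = 2 := by
    rw [Finset.card_insert_of_notMem (by simp [hbc.ne]), Finset.card_singleton]
  have hset : ({a,b,c} : Finset (Fin N)).powersetCard 2 =
      {{b,c}, {a,b}, {a,c}} := by
    rw [show ({a,b,c} : Finset (Fin N)) = insert a {b,c} from rfl,
      Finset.powersetCard_succ_insert (by simp [hab.ne, hac.ne]) 1,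
      show Nat.succ 1 = ({b,c} : Finset (Fin N)).card from hbc2.symm,
      Finset.powersetCard_self, Finset.powersetCard_one,
      Finset.map_insert, Finset.map_singleton, Finset.image_insert,
      Finset.image_singleton]
    ext T; simp; tauto
  have hne1 : ({b,c} : Finset (Fin N)) ≠ {a,b} := by
    intro h
    have : a ∈ ({b,c} : Finset (Fin N)) := by rw [h]; simp
    simp [hab.ne, hac.ne] at this
  have hne2 : ({b,c} : Finset (Fin N)) ≠ {a,c} := by
    intro h
    have : a ∈ ({b,c} : Finset (Fin N)) := by rw [h]; simp
    simp [hab.ne, hac.ne] at this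
  have hne3 : ({a,b} : Finset (Fin N)) ≠ {a,c} := by
    intro h
    have : c ∈ ({a,b} : Finset (Fin N)) := by rw [h]; simp
    simp [hac.ne', hbc.ne'] at this
  rw [ncElem, if_neg (by norm_num), show (2:ℤ).toNat = 2 from rfl, hset,
    Finset.sum_insert (by simp [hne1, hne2]),
    Finset.sum_insert (by simp [hne3]), Finset.sum_singleton,
    sort_pair' hbc, sort_pair' hab, sort_pair' hac]
  simp [add_assoc]


lemma case2 {a b : Fin N} (hab : a < b) :
    ncElem N 1 {a, b} * ncElem N 2 {a, b} - ncElem N 2 {a, b} * ncElem N 1 {a, b}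
      ∈ TwoSidedIdeal.span (genC N) := by
  rw [ncElem_one, ncElem_two_pair hab, Finset.sum_pair hab.ne]
  have hg : (ι ℤ b * ι ℤ b * ι ℤ a + ι ℤ a * ι ℤ b * ι ℤ a
        - ι ℤ b * ι ℤ a * ι ℤ b - ι ℤ b * ι ℤ a * ι ℤ a : FreeAlgebra ℤ (Fin N))
      ∈ TwoSidedIdeal.span (genC N) :=
    TwoSidedIdeal.subset_span (Or.inl (Or.inl ⟨a, b, hab, rfl⟩))
  convert hg using 1
  noncomm_ring

lemma case3 {a b c : Fin N} (hab : a < b) (hbc : b < c) :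
    ncElem N 1 {a, b, c} * ncElem N 2 {a, b, c}
      - ncElem N 2 {a, b, c} * ncElem N 1 {a, b, c}
      ∈ TwoSidedIdeal.span (genC N) := by
  have hac : a < c := hab.trans hbc
  rw [ncElem_one, ncElem_two_triple hab hbc,
    Finset.sum_insert (by simp [hab.ne, hac.ne]), Finset.sum_pair hbc.ne]
  have h1 : (ι ℤ b * ι ℤ b * ι ℤ a + ι ℤ a * ι ℤ b * ι ℤ a
        - ι ℤ b * ι ℤ a * ι ℤ b - ι ℤ b * ι ℤ a * ι ℤ a : FreeAlgebra ℤ (Fin N))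
      ∈ TwoSidedIdeal.span (genC N) :=
    TwoSidedIdeal.subset_span (Or.inl (Or.inl ⟨a, b, hab, rfl⟩))
  have h2 : (ι ℤ c * ι ℤ c * ι ℤ a + ι ℤ a * ι ℤ c * ι ℤ a
        - ι ℤ c * ι ℤ a * ι ℤ c - ι ℤ c * ι ℤ a * ι ℤ a : FreeAlgebra ℤ (Fin N))
      ∈ TwoSidedIdeal.span (genC N) :=
    TwoSidedIdeal.subset_span (Or.inl (Or.inl ⟨a, c, hac, rfl⟩))
  have h3 : (ι ℤ c * ι ℤ c * ι ℤ b + ι ℤ b * ι ℤ c * ι ℤ b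
        - ι ℤ c * ι ℤ b * ι ℤ c - ι ℤ c * ι ℤ b * ι ℤ b : FreeAlgebra ℤ (Fin N))
      ∈ TwoSidedIdeal.span (genC N) :=
    TwoSidedIdeal.subset_span (Or.inl (Or.inl ⟨b, c, hbc, rfl⟩))
  have h4 : (ι ℤ b * ι ℤ c * ι ℤ a + ι ℤ a * ι ℤ c * ι ℤ b
        - ι ℤ b * ι ℤ a * ι ℤ c - ι ℤ c * ι ℤ a * ι ℤ b : FreeAlgebra ℤ (Fin N))
      ∈ TwoSidedIdeal.span (genC N) :=
    TwoSidedIdeal.subset_span (Or.inl (Or.inr ⟨a, b, c, hab, hbc, rfl⟩))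
  have := TwoSidedIdeal.add_mem _ (TwoSidedIdeal.add_mem _ (TwoSidedIdeal.add_mem _ h1 h2) h3) h4
  convert this using 1
  noncomm_ring

end helpers

/-- Modulo `I_C`, the elementary symmetric functions `e_1(u_S)` and `e_2(u_S)`
commute for every subset `S` with at most 3 elements. -/
theorem stmt18 (N : ℕ) (S : Finset (Fin N)) (hS : S.card ≤ 3) :
    ncElem N 1 S * ncElem N 2 S - ncElem N 2 S * ncElem N 1 S
      ∈ TwoSidedIdeal.span (genC N) := by
  rcases lt_or_ge S.card 2 with h | h
  · rw [ncElem_two_small h]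
    simp
  · have h23 : S.card = 2 ∨ S.card = 3 := by omega
    rcases h23 with hc | hc
    · obtain ⟨a, b, hne, rfl⟩ := Finset.card_eq_two.mp hc
      rcases hne.lt_or_gt with hab | hba
      · exact case2 hab
      · rw [Finset.pair_comm]; exact case2 hba
    · have hlen : (S.sort (· ≤ ·)).length = 3 := by rw [Finset.length_sort, hc]
      obtain ⟨a, b, c, hL⟩ := List.length_eq_three.mp hlen
      have hs := S.sortedLT_sort.pairwise
      rw [hL] at hs
      simp only [List.pairwise_cons, List.mem_cons, List.mem_singleton] at hs
      have hab : a < b := hs.1 b (by simp)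
      have hbc : b < c := hs.2.1 c (by simp)
      have hSf : S = {a, b, c} := by
        have h := Finset.sort_toFinset S (· ≤ ·)
        rw [hL] at h
        simpa using h.symm
      rw [hSf]
      exact case3 hab hbc
end
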